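/- Let M be an invertible (k+1)×(k+1) real matrix with column sums 1, D a (k+1)×(k+1) matrix with column sums 0, p ∈ ℝ^{k+1}, and e ∈ ℝ^{k+1} a row vector. Define the row vector η ∈ ℝᵏ by ηⱼ = e_{j+1} − e_1 (j = 1,…,k), the k×k matrix Ξ by Ξ_{i,j} = M_{i+1,j+1} − M_{i+1,1}, and d ∈ ℝᵏ as the last k coordinates of D·p. Then e·M⁻¹·D·p = η·Ξ⁻¹·d. -/

import Mathlib

open Matrix

private lemma sum_mulVec {k : ℕ} (M : Matrix (Fin (k+1)) (Fin (k+1)) ℝ)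
    (hMcol : ∀ j, ∑ i, M i j = 1) (x : Fin (k+1) → ℝ) :
    ∑ i, (M.mulVec x) i = ∑ i, x i := by
  simp only [mulVec, dotProduct]
  rw [Finset.sum_comm]
  simp [← Finset.sum_mul, hMcol]

private lemma key_row {k : ℕ} (M : Matrix (Fin (k+1)) (Fin (k+1)) ℝ)
    (Ξ : Matrix (Fin k) (Fin k) ℝ)
    (hΞ : ∀ i j, Ξ i j = M i.succ j.succ - M i.succ 0)
    (x : Fin (k+1) → ℝ) (hx : ∑ i, x i = 0) (i : Fin k) :
    Ξ.mulVec (fun j => x j.succ) i = (M.mulVec x) i.succ := by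
  have htail : ∑ j : Fin k, x j.succ = - x 0 := by
    rw [Fin.sum_univ_succ] at hx; linarith
  simp only [mulVec, dotProduct, hΞ]
  rw [Fin.sum_univ_succ]
  have : ∑ j : Fin k, (M i.succ j.succ - M i.succ 0) * x j.succ
      = ∑ j : Fin k, M i.succ j.succ * x j.succ - M i.succ 0 * ∑ j : Fin k, x j.succ := by
    rw [Finset.mul_sum, ← Finset.sum_sub_distrib]; ring_nf
    exact Finset.sum_congr rfl (fun _ _ => by ring)
  rw [this, htail]; ring

/-- Reparameterization identity: with `M` invertible with column sums 1, `D` with column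
sums 0, `p` a vector, `e` a row vector, `η j = e (j+1) - e 0` the contrast vector of `e`,
`Ξ` the contrast matrix of `M`, and `d` the last `k` coordinates of `D *ᵥ p`, one has
`e ⬝ᵥ (M⁻¹ *ᵥ (D *ᵥ p)) = η ⬝ᵥ (Ξ⁻¹ *ᵥ d)`. -/
theorem bias_reparameterization {k : ℕ} (M D : Matrix (Fin (k+1)) (Fin (k+1)) ℝ)
    (hM : IsUnit M.det)
    (hMcol : ∀ j, ∑ i, M i j = 1)
    (hDcol : ∀ j, ∑ i, D i j = 0)
    (p : Fin (k+1) → ℝ) (e : Fin (k+1) → ℝ)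
    (η : Fin k → ℝ)
    (hη : ∀ j, η j = e j.succ - e 0)
    (Ξ : Matrix (Fin k) (Fin k) ℝ)
    (hΞ : ∀ i j, Ξ i j = M i.succ j.succ - M i.succ 0)
    (d : Fin k → ℝ)
    (hd : ∀ j, d j = (D.mulVec p) j.succ) :
    e ⬝ᵥ (M⁻¹.mulVec (D.mulVec p)) = η ⬝ᵥ (Ξ⁻¹.mulVec d) := by
  set v := D.mulVec p with hv
  set u := M⁻¹.mulVec v with hu
  have hMu : M.mulVec u = v := by
    rw [hu, mulVec_mulVec, M.mul_nonsing_inv hM, one_mulVec]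
  have hvsum : ∑ i, v i = 0 := by
    simp only [hv, mulVec, dotProduct]
    rw [Finset.sum_comm]
    simp [← Finset.sum_mul, hDcol]
  have husum : ∑ i, u i = 0 := by
    rw [← sum_mulVec M hMcol u, hMu, hvsum]
  -- Ξ is invertible
  have hΞunit : IsUnit Ξ.det := by
    rw [← Matrix.isUnit_iff_isUnit_det, ← Matrix.mulVec_injective_iff_isUnit]
    intro x y hxy
    have hgen : ∀ x : Fin k → ℝ, Ξ.mulVec x = 0 → x = 0 := by
      intro x hx0
      set x' : Fin (k+1) → ℝ := Fin.cons (-∑ j, x j) x with hx'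
      have hx'sum : ∑ i, x' i = 0 := by
        rw [Fin.sum_univ_succ]; simp [hx']
      have htail : (fun j : Fin k => x' j.succ) = x := by
        funext j; simp [hx']
      have hsucc : ∀ i : Fin k, (M.mulVec x') i.succ = 0 := by
        intro i
        rw [← key_row M Ξ hΞ x' hx'sum i, htail, hx0]
        rfl
      have hzero : (M.mulVec x') 0 = 0 := by
        have := sum_mulVec M hMcol x'
        rw [hx'sum, Fin.sum_univ_succ] at this
        simp only [hsucc] at this
        simpa using this
      have hMx' : M.mulVec x' = 0 := by
        funext i
        refine Fin.cases ?_ ?_ i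
        · exact hzero
        · intro i; exact hsucc i
      have hinj := Matrix.mulVec_injective_iff_isUnit.2 ((Matrix.isUnit_iff_isUnit_det M).2 hM)
      have : x' = 0 := by
        apply hinj; rw [hMx']; simp [mulVec_zero]
      funext j
      have := congrFun this j.succ
      simpa [hx'] using this
    have := hgen (x - y) (by rw [mulVec_sub, hxy, sub_self])
    exact sub_eq_zero.mp this
  -- Ξ (tail u) = d
  have hΞu : Ξ.mulVec (fun j => u j.succ) = d := by
    funext i
    rw [key_row M Ξ hΞ u husum i, hMu, hd]
  have htailu : Ξ⁻¹.mulVec d = fun j => u j.succ := by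
    rw [← hΞu, mulVec_mulVec, Ξ.nonsing_inv_mul hΞunit, one_mulVec]
  rw [htailu]
  -- e ⬝ u = η ⬝ tail u
  have htail : ∑ j : Fin k, u j.succ = - u 0 := by
    rw [Fin.sum_univ_succ] at husum; linarith
  simp only [dotProduct, hη]
  rw [Fin.sum_univ_succ]
  have : ∑ j : Fin k, (e j.succ - e 0) * u j.succ
      = ∑ j : Fin k, e j.succ * u j.succ - e 0 * ∑ j : Fin k, u j.succ := by
    rw [Finset.mul_sum, ← Finset.sum_sub_distrib]; ring_nf
    exact Finset.sum_congr rfl (fun _ _ => by ring)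
  rw [this, htail]; ring
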